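/- Let H(A) = (1/2) |A|². If λ, μ ∈ ℝ^{3×3} satisfy |λ| > 3/2, then g_H(λ, μ) = +∞; that is, for every M ∈ ℝ there exists A ∈ ℝ^{3×3} with A:μ + λ:T(A) − (1/2)|A|² ≥ M. -/
import Mathlib


open scoped BigOperators

noncomputable section

/-- `3 × 3` real matrices, as functions of (row, column). -/
abbrev M33 := Fin 3 → Fin 3 → ℝ

/-- The Levi-Civita symbol on indices in `Fin 3`. -/
def eps (i j k : Fin 3) : ℝ :=
  ((i.val : ℝ) - j.val) * ((j.val : ℝ) - k.val) * ((k.val : ℝ) - i.val) / 2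

/-- The contraction `X : Y = Σ_{i,j} X_{ij} Y_{ij}`. -/
def dotM (X Y : M33) : ℝ := ∑ i, ∑ j, X i j * Y i j

/-- `T(A)_{Zp} = ε_{pqr} ε_{ZBC} A_{Bq} A_{Cr}`. -/
def Tmap (A : M33) : M33 :=
  fun Z p => ∑ q, ∑ r, ∑ B, ∑ C, eps p q r * eps Z B C * A B q * A C r

/-- The Frobenius norm on `M33`. -/
def fnorm (A : M33) : ℝ := Real.sqrt (∑ i, ∑ j, (A i j) ^ 2)

/-- `g_H(λ, μ) = sup_{A} ( A:μ + λ:T(A) − H(A) )`, valued in `ℝ ∪ {±∞}` (the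
supremum is never `-∞` since `H` is real-valued). -/
def gH (H : M33 → ℝ) (lam mu : M33) : EReal :=
  ⨆ A : M33, ((dotM A mu + dotM lam (Tmap A) - H A : ℝ) : EReal)

/-- Auxiliary matrix with two nonzero entries. -/
def A0 (i j : Fin 3) (a b : ℝ) : M33 :=
  fun B q => if B = i + 1 ∧ q = j + 1 then a else if B = i + 2 ∧ q = j + 2 then b else 0

lemma Tdot (i j : Fin 3) (a b : ℝ) (lam : M33) :
    dotM lam (Tmap (A0 i j a b)) = 2 * a * b * lam i j := by
  fin_cases i <;> fin_cases j <;>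
    simp [dotM, Tmap, A0, eps, Fin.sum_univ_three] <;> ring

lemma dotA0 (i j : Fin 3) (a b : ℝ) (mu : M33) :
    dotM (A0 i j a b) mu = a * mu (i + 1) (j + 1) + b * mu (i + 2) (j + 2) := by
  fin_cases i <;> fin_cases j <;>
    simp [dotM, A0, Fin.sum_univ_three] <;> ring

lemma sumsqA0 (i j : Fin 3) (a b : ℝ) :
    ∑ B, ∑ q, (A0 i j a b B q) ^ 2 = a ^ 2 + b ^ 2 := by
  fin_cases i <;> fin_cases j <;>
    simp [A0, Fin.sum_univ_three] <;> ring

lemma fnorm_sq (A : M33) : fnorm A ^ 2 = ∑ i, ∑ j, (A i j) ^ 2 := by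
  apply Real.sq_sqrt
  exact Finset.sum_nonneg fun i _ => Finset.sum_nonneg fun j _ => sq_nonneg _

lemma exists_big_entry (lam : M33) (hlam : 3 / 2 < fnorm lam) :
    ∃ i j, 1 / 4 < (lam i j) ^ 2 := by
  by_contra h
  push_neg at h
  have hsum : ∑ i, ∑ j, (lam i j) ^ 2 ≤ 9 / 4 := by
    calc ∑ i, ∑ j, (lam i j) ^ 2 ≤ ∑ _i : Fin 3, (3 : ℝ) / 4 := by
          refine Finset.sum_le_sum fun i _ => ?_
          calc ∑ j, (lam i j) ^ 2 ≤ ∑ _j : Fin 3, (1 : ℝ) / 4 :=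
                Finset.sum_le_sum fun j _ => h i j
            _ = 3 / 4 := by simp; norm_num
      _ = 9 / 4 := by simp; norm_num
  have h2 : fnorm lam ^ 2 ≤ 9 / 4 := by rw [fnorm_sq]; exact hsum
  nlinarith [hlam]

theorem stmt9 (lam mu : M33) (hlam : 3 / 2 < fnorm lam) :
    gH (fun A => (1 / 2) * fnorm A ^ 2) lam mu = ⊤ ∧
    ∀ Mbound : ℝ, ∃ A : M33,
      Mbound ≤ dotM A mu + dotM lam (Tmap A) - (1 / 2) * fnorm A ^ 2 := by
  obtain ⟨i, j, hij⟩ := exists_big_entry lam hlam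
  set s : ℝ := if lam i j < 0 then -1 else 1 with hs
  have hs2 : s ^ 2 = 1 := by rw [hs]; split <;> norm_num
  have hsl : 1 / 2 < s * lam i j := by
    rw [hs]; split <;> rename_i hc <;> nlinarith
  have key : ∀ Mbound : ℝ, ∃ A : M33,
      Mbound ≤ dotM A mu + dotM lam (Tmap A) - (1 / 2) * fnorm A ^ 2 := by
    intro M
    obtain ⟨c, hc⟩ : ∃ c : ℝ, c = s * mu (i + 1) (j + 1) + mu (i + 2) (j + 2) := ⟨_, rfl⟩
    obtain ⟨δ, hδ⟩ : ∃ δ : ℝ, δ = 2 * s * lam i j - 1 := ⟨_, rfl⟩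
    have hδpos : 0 < δ := by rw [hδ]; linarith
    obtain ⟨t, ht⟩ : ∃ t : ℝ, t = (|M| + |c|) / δ + 1 := ⟨_, rfl⟩
    have ht1 : 1 ≤ t := by
      have : 0 ≤ (|M| + |c|) / δ :=
        div_nonneg (by positivity) hδpos.le
      linarith
    have htδ : |M| + |c| ≤ δ * t := by
      rw [ht]
      rw [mul_add, mul_one, mul_div_cancel₀ _ hδpos.ne']
      linarith
    refine ⟨A0 i j (t * s) t, ?_⟩
    have e1 : dotM (A0 i j (t * s) t) mu = t * c := by
      rw [dotA0, hc]; ring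
    have e2 : dotM lam (Tmap (A0 i j (t * s) t)) = 2 * t ^ 2 * (s * lam i j) := by
      rw [Tdot]; ring
    have e3 : fnorm (A0 i j (t * s) t) ^ 2 = 2 * t ^ 2 := by
      rw [fnorm_sq, sumsqA0]; nlinarith [hs2]
    rw [e1, e2, e3]
    have hobj : t * c + 2 * t ^ 2 * (s * lam i j) - 1 / 2 * (2 * t ^ 2) = t * c + δ * t ^ 2 := by
      rw [hδ]; ring
    rw [hobj]
    have hcabs : -|c| ≤ c := neg_abs_le c
    have hM : M ≤ |M| := le_abs_self M
    have ht0 : (0:ℝ) ≤ t := le_trans zero_le_one ht1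
    nlinarith [mul_le_mul_of_nonneg_left htδ ht0,
      mul_le_mul_of_nonneg_left hcabs ht0,
      mul_nonneg (sub_nonneg.2 ht1) (abs_nonneg M), abs_nonneg M]
  refine ⟨?_, key⟩
  rw [gH, iSup_eq_top]
  intro b hb
  induction b with
  | bot =>
      obtain ⟨A, hA⟩ := key 0
      exact ⟨A, by exact_mod_cast EReal.bot_lt_coe _⟩
  | coe r =>
      obtain ⟨A, hA⟩ := key (r + 1)
      refine ⟨A, ?_⟩
      have : r < dotM A mu + dotM lam (Tmap A) - 1 / 2 * fnorm A ^ 2 := by linarith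
      exact_mod_cast this
  | top => exact absurd hb (lt_irrefl _)
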